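/- Let M be an additive abelian group, let B be a commutative ring with an M-grading B = ⊕_{m∈M} B_m, and let I ⊆ B be a homogeneous ideal with I_m = B_m for all m ≠ 0 and such that (B₀, I₀) is a henselian pair, where I₀ := I ∩ B₀. Let E and F be finitely generated M-graded B-modules that are projective as B-modules. If there exists a B-linear bijection E/IE → F/IF which, for every m ∈ M, maps the image of E_m in E/IE onto the image of F_m in F/IF, then there exists a graded B-linear bijection E → F. -/

import Mathlib

set_option linter.unusedSectionVars false
set_option synthInstance.maxHeartbeats 1000000
set_option maxHeartbeats 1000000

open DirectSum

section Helpers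

variable {M : Type*} [AddCommGroup M] [DecidableEq M]
variable {B : Type*} [CommRing B] (𝒜 : M → AddSubgroup B) [GradedRing 𝒜]
variable {F : Type*} [AddCommGroup F] [Module B F]
variable (ℱ : M → AddSubgroup F) [SetLike.GradedSMul 𝒜 ℱ] [DirectSum.Decomposition ℱ]

/-- The additive projection onto the degree-`n` component. -/
def GHLproj (n : M) : F →+ F where
  toFun x := (DirectSum.decompose ℱ x n : F)
  map_zero' := by simp
  map_add' x y := by simp

lemma GHLproj_apply (n : M) (x : F) : GHLproj ℱ n x = (DirectSum.decompose ℱ x n : F) := rfl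

lemma GHLproj_mem (n : M) (x : F) : GHLproj ℱ n x ∈ ℱ n := SetLike.coe_mem _

lemma GHLproj_of_mem_same {m : M} {x : F} (hx : x ∈ ℱ m) : GHLproj ℱ m x = x :=
  DirectSum.decompose_of_mem_same ℱ hx

lemma GHLproj_of_mem_ne {m n : M} {x : F} (hx : x ∈ ℱ m) (h : m ≠ n) : GHLproj ℱ n x = 0 :=
  DirectSum.decompose_of_mem_ne ℱ hx h

lemma GHL_smul_mem {k m : M} {b : B} {x : F} (hb : b ∈ 𝒜 k) (hx : x ∈ ℱ m) :
    b • x ∈ ℱ (k + m) :=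
  SetLike.GradedSMul.smul_mem hb hx

/-- Projection of a homogeneous scalar multiple. -/
lemma GHLproj_homog_smul {k : M} {b : B} (hb : b ∈ 𝒜 k) (y : F) (n : M) :
    GHLproj ℱ n (b • y) = b • GHLproj ℱ (n - k) y := by
  induction y using DirectSum.Decomposition.inductionOn ℱ with
  | zero => simp
  | @homogeneous j y =>
    have hby : b • (y : F) ∈ ℱ (k + j) := GHL_smul_mem 𝒜 ℱ hb y.2
    by_cases h : j = n - k
    · have hkj : k + j = n := by rw [h]; abel
      rw [GHLproj_of_mem_same ℱ (hkj ▸ hby), GHLproj_of_mem_same ℱ (h ▸ y.2)]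
    · have hkj : k + j ≠ n := fun hc => h (by rw [← hc]; abel)
      rw [GHLproj_of_mem_ne ℱ hby hkj, GHLproj_of_mem_ne ℱ y.2 h, smul_zero]
  | add x y hx hy => rw [smul_add, map_add, map_add, hx, hy, smul_add]

/-- Projection onto the degree of a homogeneous element, of an arbitrary scalar multiple. -/
lemma GHLproj_smul_self (r : B) {m : M} {f : F} (hf : f ∈ ℱ m) :
    GHLproj ℱ m (r • f) = (DirectSum.decompose 𝒜 r 0 : B) • f := by
  classical
  conv_lhs => rw [← DirectSum.sum_support_decompose 𝒜 r]
  rw [Finset.sum_smul, map_sum]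
  rw [Finset.sum_eq_single 0]
  · rw [GHLproj_homog_smul 𝒜 ℱ (SetLike.coe_mem _)]
    rw [sub_zero, GHLproj_of_mem_same ℱ hf]
  · intro k _ hk
    rw [GHLproj_homog_smul 𝒜 ℱ (SetLike.coe_mem _)]
    rw [GHLproj_of_mem_ne ℱ hf (fun hc => hk (sub_eq_self.1 hc.symm)), smul_zero]
  · intro h0
    rw [DFinsupp.notMem_support_iff.1 h0]
    simp

/-- `I • ⊤` is a graded submodule when `I` is homogeneous. -/
lemma GHLproj_mem_smul_top (I : Ideal B) (hI : Ideal.IsHomogeneous 𝒜 I) {z : F}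
    (hz : z ∈ I • (⊤ : Submodule B F)) (n : M) : GHLproj ℱ n z ∈ I • (⊤ : Submodule B F) := by
  classical
  refine Submodule.smul_induction_on hz ?_ ?_
  · intro a ha f _
    have ha' : a • f = ∑ k ∈ DFinsupp.support (DirectSum.decompose 𝒜 a),
        (DirectSum.decompose 𝒜 a k : B) • f := by
      conv_lhs => rw [← DirectSum.sum_support_decompose 𝒜 a]
      rw [Finset.sum_smul]
    rw [ha', map_sum]
    refine Submodule.sum_mem _ fun k _ => ?_
    rw [GHLproj_homog_smul 𝒜 ℱ (SetLike.coe_mem _)]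
    exact Submodule.smul_mem_smul (hI k ha) trivial
  · intro x y hx hy
    rw [map_add]; exact Submodule.add_mem _ hx hy

end Helpers

/-- Graded projective modules over a graded ring with `(B₀, I₀)` henselian and
`I_m = B_m` for `m ≠ 0`: if the reductions modulo `I` of two finitely generated
graded projective `B`-modules `E` and `F` are isomorphic compatibly with the
gradings (a `B`-linear bijection `E/IE → F/IF` mapping the image of `E_m` onto the
image of `F_m` for every `m`), then there is a graded `B`-linear bijection `E → F`. -/
theorem graded_henselian_isomorphism_lifting
    {M : Type*} [AddCommGroup M] [DecidableEq M]
    {B : Type*} [CommRing B] (𝒜 : M → AddSubgroup B) [GradedRing 𝒜]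
    (I : Ideal B) (hI : Ideal.IsHomogeneous 𝒜 I)
    (hIm : ∀ m : M, m ≠ 0 → ∀ x : B, x ∈ 𝒜 m → x ∈ I)
    (hHens : HenselianRing (𝒜 0)
      (Ideal.comap ((SetLike.GradeZero.subring 𝒜).subtype : (𝒜 0) →+* B) I))
    {E : Type*} [AddCommGroup E] [Module B E]
    (ℰ : M → AddSubgroup E) [SetLike.GradedSMul 𝒜 ℰ] [DirectSum.Decomposition ℰ]
    [Module.Finite B E] [Module.Projective B E]
    {F : Type*} [AddCommGroup F] [Module B F]
    (ℱ : M → AddSubgroup F) [SetLike.GradedSMul 𝒜 ℱ] [DirectSum.Decomposition ℱ]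
    [Module.Finite B F] [Module.Projective B F]
    (hiso : ∃ w : (E ⧸ (I • (⊤ : Submodule B E))) →ₗ[B] (F ⧸ (I • (⊤ : Submodule B F))),
      Function.Bijective w ∧
        ∀ m : M, w '' (Submodule.Quotient.mk '' (ℰ m : Set E)) =
          Submodule.Quotient.mk '' (ℱ m : Set F)) :
    ∃ u : E →ₗ[B] F, (∀ m : M, ∀ x ∈ ℰ m, u x ∈ ℱ m) ∧ Function.Bijective u := by
  classical
  obtain ⟨w, hwbij, hwgr⟩ := hiso
  -- units from `I₀ ⊆ jacobson ⊥`
  have hunit : ∀ r : B, r - 1 ∈ I → IsUnit (DirectSum.decompose 𝒜 r 0 : B) := by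
    intro r hr
    set r0 : B := (DirectSum.decompose 𝒜 r 0 : B) with hr0
    have h1 : (DirectSum.decompose 𝒜 (r - 1) 0 : B) = r0 - 1 := by
      rw [DirectSum.decompose_sub, DFinsupp.sub_apply, AddSubgroupClass.coe_sub,
        DirectSum.decompose_of_mem_same 𝒜 (SetLike.GradedOne.one_mem (A := 𝒜))]
    have h2 : r0 - 1 ∈ I := h1 ▸ hI 0 hr
    have h3 : r0 - 1 ∈ 𝒜 0 := h1 ▸ SetLike.coe_mem _
    set x : (𝒜 0) := ⟨r0, SetLike.coe_mem _⟩ with hx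
    have h4 : x - 1 ∈ Ideal.comap ((SetLike.GradeZero.subring 𝒜).subtype : (𝒜 0) →+* B) I := by
      show ((x - 1 : (𝒜 0)) : B) ∈ I
      convert h2 using 1
      exact rfl
    have h5 : IsUnit x := Ideal.isUnit_of_sub_one_mem_jacobson_bot x (hHens.jac h4)
    exact h5.map ((SetLike.GradeZero.subring 𝒜).subtype)
  -- a linear lift `u₀` of `w`
  obtain ⟨u₀, hu₀⟩ := Module.projective_lifting_property
    (Submodule.mkQ (I • (⊤ : Submodule B F)))
    (w ∘ₗ Submodule.mkQ (I • (⊤ : Submodule B E)))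
    (Submodule.mkQ_surjective _)
  have hu₀' : ∀ x : E, Submodule.Quotient.mk (u₀ x) = w (Submodule.Quotient.mk x) := by
    intro x
    have := LinearMap.congr_fun hu₀ x
    simpa using this
  -- the degree-zero component `u'` of `u₀`
  let g : ∀ m : M, (ℰ m) →+ F := fun m =>
    (GHLproj ℱ m).comp (u₀.toAddMonoidHom.comp (ℰ m).subtype)
  let u' : E →+ F :=
    (DirectSum.toAddMonoid g).comp (DirectSum.decomposeAddEquiv ℰ).toAddMonoidHom
  have hu'_homog : ∀ {m : M} {x : E}, x ∈ ℰ m → u' x = GHLproj ℱ m (u₀ x) := by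
    intro m x hx
    show DirectSum.toAddMonoid g ((DirectSum.decomposeAddEquiv ℰ) x) = _
    rw [DirectSum.decomposeAddEquiv_apply, DirectSum.decompose_of_mem ℰ hx,
      DirectSum.toAddMonoid_of]
    rfl
  have hu'_homsmul : ∀ {k : M} (b : (𝒜 k)) {m : M} (x : (ℰ m)),
      u' ((b : B) • (x : E)) = (b : B) • u' (x : E) := by
    intro k b m x
    have h1 : (b : B) • (x : E) ∈ ℰ (k + m) := GHL_smul_mem 𝒜 ℰ b.2 x.2
    rw [hu'_homog h1, hu'_homog x.2, map_smul,
      GHLproj_homog_smul 𝒜 ℱ b.2, add_sub_cancel_left]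
  have hu'_smul : ∀ (b : B) (x : E), u' (b • x) = b • u' x := by
    intro b
    induction b using DirectSum.Decomposition.inductionOn 𝒜 with
    | zero => intro x; simp
    | @homogeneous k b =>
      intro x
      induction x using DirectSum.Decomposition.inductionOn ℰ with
      | zero => simp
      | @homogeneous m x => exact hu'_homsmul b x
      | add x y hx hy => rw [smul_add, map_add, hx, hy, map_add, smul_add]
    | add b c hb hc => intro x; rw [add_smul, map_add, hb, hc, add_smul]
  let u : E →ₗ[B] F :=
    { toFun := u', map_add' := u'.map_add, map_smul' := hu'_smul }
  have hu_apply : ∀ x : E, u x = u' x := fun _ => rfl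
  have hu_graded : ∀ m : M, ∀ x ∈ ℰ m, u x ∈ ℱ m := by
    intro m x hx
    rw [hu_apply, hu'_homog hx]
    exact GHLproj_mem ℱ m _
  -- `u` commutes with projections
  have hproj_u : ∀ (x : E) (n : M), u (GHLproj ℰ n x) = GHLproj ℱ n (u x) := by
    intro x n
    induction x using DirectSum.Decomposition.inductionOn ℰ with
    | zero => simp
    | @homogeneous m x =>
      by_cases h : m = n
      · subst h
        rw [GHLproj_of_mem_same ℰ x.2, GHLproj_of_mem_same ℱ (hu_graded m x x.2)]
      · rw [GHLproj_of_mem_ne ℰ x.2 h, GHLproj_of_mem_ne ℱ (hu_graded m x x.2) h, map_zero]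
    | add x y hx hy => rw [map_add, map_add, map_add, map_add, hx, hy]
  -- `u` also lifts `w`
  have hmod0 : ∀ x : E, u x - u₀ x ∈ I • (⊤ : Submodule B F) := by
    intro x
    induction x using DirectSum.Decomposition.inductionOn ℰ with
    | zero => simp
    | @homogeneous m x =>
      have h1 : w (Submodule.Quotient.mk (x : E)) ∈
          Submodule.Quotient.mk '' (ℱ m : Set F) := by
        rw [← hwgr m]
        exact ⟨Submodule.Quotient.mk (x : E), ⟨x, x.2, rfl⟩, rfl⟩
      obtain ⟨f, hf, hfx⟩ := h1
      have hg : u₀ (x : E) - f ∈ I • (⊤ : Submodule B F) := by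
        rw [← Submodule.Quotient.eq]
        rw [hu₀' (x : E), ← hfx]
      have h2 : u (x : E) = f + GHLproj ℱ m (u₀ (x : E) - f) := by
        rw [hu_apply, hu'_homog x.2, map_sub, GHLproj_of_mem_same ℱ hf]
        abel
      have h3 : u (x : E) - u₀ (x : E) =
          GHLproj ℱ m (u₀ (x : E) - f) - (u₀ (x : E) - f) := by
        rw [h2]; abel
      rw [h3]
      exact sub_mem (GHLproj_mem_smul_top 𝒜 ℱ I hI hg m) hg
    | add x y hx hy =>
      have : u (x + y) - u₀ (x + y) = (u x - u₀ x) + (u y - u₀ y) := by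
        rw [map_add, map_add]; abel
      rw [this]
      exact add_mem hx hy
  have hmod : ∀ x : E, Submodule.Quotient.mk (u x) = w (Submodule.Quotient.mk x) := by
    intro x
    rw [← hu₀' x, Submodule.Quotient.eq]
    exact hmod0 x
  -- surjectivity
  have hsurj : Function.Surjective u := by
    set N := LinearMap.range u with hN
    have hNgr : ∀ z ∈ N, ∀ n : M, GHLproj ℱ n z ∈ N := by
      rintro z ⟨x, rfl⟩ n
      exact ⟨GHLproj ℰ n x, hproj_u x n⟩
    -- F/N is spanned by I
    have hfg : (⊤ : Submodule B (F ⧸ N)).FG := Module.Finite.fg_top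
    have hle : (⊤ : Submodule B (F ⧸ N)) ≤ I • (⊤ : Submodule B (F ⧸ N)) := by
      intro z _
      obtain ⟨f, rfl⟩ := N.mkQ_surjective z
      obtain ⟨q, hq⟩ := hwbij.2 (Submodule.Quotient.mk f)
      obtain ⟨x, rfl⟩ := (I • (⊤ : Submodule B E)).mkQ_surjective q
      have h1 : Submodule.Quotient.mk (u x) = (Submodule.Quotient.mk f :
          F ⧸ (I • (⊤ : Submodule B F))) := by
        rw [hmod x]; exact hq
      have h2 : f - u x ∈ I • (⊤ : Submodule B F) := by
        rw [← Submodule.Quotient.eq]; exact h1.symm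
      have hz : N.mkQ (u x) = 0 := by
        rw [Submodule.mkQ_apply]
        exact (Submodule.Quotient.mk_eq_zero N).2 ⟨x, rfl⟩
      have h3 : N.mkQ f = N.mkQ (f - u x) := by
        rw [map_sub, hz, sub_zero]
      rw [h3]
      have := Submodule.map_smul'' I (⊤ : Submodule B F) N.mkQ
      rw [Submodule.map_top, Submodule.range_mkQ] at this
      rw [← this]
      exact Submodule.mem_map_of_mem h2
    obtain ⟨r, hr1, hr0⟩ :=
      Submodule.exists_sub_one_mem_and_smul_eq_zero_of_fg_of_le_smul I _ hfg hle
    have hrN : ∀ f : F, r • f ∈ N := by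
      intro f
      have h := hr0 (N.mkQ f) trivial
      rw [← map_smul, Submodule.mkQ_apply] at h
      exact (Submodule.Quotient.mk_eq_zero N).1 h
    have hr0N : ∀ f : F, (DirectSum.decompose 𝒜 r 0 : B) • f ∈ N := by
      intro f
      induction f using DirectSum.Decomposition.inductionOn ℱ with
      | zero => rw [smul_zero]; exact zero_mem _
      | @homogeneous m f =>
        have h1 := hNgr _ (hrN (f : F)) m
        rwa [GHLproj_smul_self 𝒜 ℱ r f.2] at h1
      | add x y hx hy => rw [smul_add]; exact add_mem hx hy
    obtain ⟨c, hc⟩ := (hunit r hr1).exists_left_inv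
    intro f
    obtain ⟨x, hx⟩ := hr0N f
    exact ⟨c • x, by rw [map_smul, hx, smul_smul, hc, one_smul]⟩
  -- injectivity
  have hinj : Function.Injective u := by
    obtain ⟨s, hs⟩ := Module.projective_lifting_property u LinearMap.id hsurj
    set p : E →ₗ[B] E := LinearMap.id - s ∘ₗ u with hp
    have hsu : ∀ y : F, u (s y) = y := fun y => LinearMap.congr_fun hs y
    have hpu : ∀ x : E, u (p x) = 0 := by
      intro x
      show u (x - s (u x)) = 0
      rw [map_sub, hsu (u x), sub_self]
    have hfix : ∀ x : E, u x = 0 → p x = x := by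
      intro x hx
      show x - s (u x) = x
      rw [hx, map_zero, sub_zero]
    set K := LinearMap.ker u with hK
    have hKrange : LinearMap.range p = K := by
      apply le_antisymm
      · rintro _ ⟨x, rfl⟩
        exact LinearMap.mem_ker.2 (hpu x)
      · intro x hx
        exact ⟨x, hfix x (LinearMap.mem_ker.1 hx)⟩
    have hKfg : K.FG := by
      rw [← hKrange, LinearMap.range_eq_map]
      exact Submodule.FG.map p Module.Finite.fg_top
    have hKle : K ≤ I • (⊤ : Submodule B E) := by
      intro x hx
      have h1 : w (Submodule.Quotient.mk x) = 0 := by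
        rw [← hmod x, LinearMap.mem_ker.1 hx]
        exact (Submodule.Quotient.mk_eq_zero _).2 (zero_mem _)
      have h2 : (Submodule.Quotient.mk x : E ⧸ (I • (⊤ : Submodule B E))) = 0 :=
        hwbij.1 (by rw [h1, map_zero])
      exact (Submodule.Quotient.mk_eq_zero _).1 h2
    have hKIK : K ≤ I • K := by
      intro x hx
      have h1 : x ∈ Submodule.map p (I • (⊤ : Submodule B E)) :=
        ⟨x, hKle hx, hfix x (LinearMap.mem_ker.1 hx)⟩
      rw [Submodule.map_smul'', Submodule.map_top, hKrange] at h1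
      exact h1
    obtain ⟨r, hr1, hrK⟩ :=
      Submodule.exists_sub_one_mem_and_smul_eq_zero_of_fg_of_le_smul I K hKfg hKIK
    have hKgr : ∀ x ∈ K, ∀ n : M, GHLproj ℰ n x ∈ K := by
      intro x hx n
      exact LinearMap.mem_ker.2 (by rw [hproj_u x n, LinearMap.mem_ker.1 hx, map_zero])
    have hr0K : ∀ x ∈ K, (DirectSum.decompose 𝒜 r 0 : B) • x = 0 := by
      intro x hx
      conv_lhs => rw [← DirectSum.sum_support_decompose ℰ x]
      rw [Finset.smul_sum]
      refine Finset.sum_eq_zero fun n _ => ?_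
      have hn : (DirectSum.decompose ℰ x n : E) ∈ K := hKgr x hx n
      have h2 := hrK _ hn
      rw [← GHLproj_smul_self 𝒜 ℰ r (SetLike.coe_mem _), h2, map_zero]
    obtain ⟨c, hc⟩ := (hunit r hr1).exists_left_inv
    have hKbot : K = ⊥ := by
      refine (Submodule.eq_bot_iff _).2 fun x hx => ?_
      calc x = (c * (DirectSum.decompose 𝒜 r 0 : B)) • x := by rw [hc, one_smul]
      _ = c • ((DirectSum.decompose 𝒜 r 0 : B) • x) := by rw [mul_smul]
      _ = 0 := by rw [hr0K x hx, smul_zero]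
    exact LinearMap.ker_eq_bot.1 hKbot
  exact ⟨u, hu_graded, hinj, hsurj⟩
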